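/- For every c′ > 0 and every ε ∈ (0, exp(−e)), there exists C > 0 such that for all t > 0: ∫_{{u ∈ ℂ : 0 < |u| < ε}} exp(−c′·(log(log(1/|u|)))²/t) · (|u|²·log(1/|u|))^{−1} dA(u) ≤ C·√t·exp(−(c′/2)·(log(log(1/ε)))²/t), where dA denotes Lebesgue measure on ℂ. -/

import Mathlib

open MeasureTheory Set Real

/-- 1-D change of variables for lintegral. -/
lemma lintegral_image_eq_lintegral_abs_deriv_mul' {s : Set ℝ} {f f' : ℝ → ℝ}
    (hs : MeasurableSet s) (hf' : ∀ x ∈ s, HasDerivWithinAt f (f' x) s x)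
    (hf : Set.InjOn f s) (g : ℝ → ENNReal) :
    ∫⁻ x in f '' s, g x = ∫⁻ x in s, ENNReal.ofReal |f' x| * g (f x) := by
  simpa only [ContinuousLinearMap.det_toSpanSingleton] using
    lintegral_image_eq_lintegral_abs_det_fderiv_mul volume hs
      (fun x hx => (hf' x hx).hasFDerivWithinAt) hf g

/-- lintegral polar change of variables on ℂ. -/
lemma lintegral_comp_polarCoord_symm' (g : ℂ → ENNReal) :
    ∫⁻ u, g u = ∫⁻ p in polarCoord.target,
      ENNReal.ofReal p.1 * g (Complex.polarCoord.symm p) := by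
  set B : ℝ × ℝ → ℝ × ℝ →L[ℝ] ℝ × ℝ := fun p =>
    LinearMap.toContinuousLinearMap (Matrix.toLin (Module.Basis.finTwoProd ℝ) (Module.Basis.finTwoProd ℝ)
      !![Real.cos p.2, -p.1 * Real.sin p.2; Real.sin p.2, p.1 * Real.cos p.2])
  have B_det : ∀ p, (B p).det = p.1 := by
    intro p
    conv_rhs => rw [← one_mul p.1, ← Real.cos_sq_add_sin_sq p.2]
    simp only [B, neg_mul, LinearMap.det_toContinuousLinearMap, LinearMap.det_toLin,
      Matrix.det_fin_two_of, sub_neg_eq_add]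
    ring
  have h : ℝ × ℝ → ENNReal := fun p => g (Complex.measurableEquivRealProd.symm p)
  calc ∫⁻ u, g u
      = ∫⁻ p : ℝ × ℝ, g (Complex.measurableEquivRealProd.symm p) := by
        exact ((Complex.volume_preserving_equiv_real_prod.symm
          Complex.measurableEquivRealProd).lintegral_map_equiv g
          Complex.measurableEquivRealProd.symm)
    _ = ∫⁻ p in polarCoord.source, g (Complex.measurableEquivRealProd.symm p) := by
        rw [← setLIntegral_univ]
        exact (setLIntegral_congr polarCoord_source_ae_eq_univ).symm
    _ = ∫⁻ p in polarCoord.symm '' polarCoord.target,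
          g (Complex.measurableEquivRealProd.symm p) := by
        rw [polarCoord.symm_image_target_eq_source]
    _ = ∫⁻ p in polarCoord.target, ENNReal.ofReal |(B p).det| *
          g (Complex.measurableEquivRealProd.symm (polarCoord.symm p)) := by
        refine lintegral_image_eq_lintegral_abs_det_fderiv_mul volume
          polarCoord.open_target.measurableSet
          (fun p _ => (hasFDerivAt_polarCoord_symm p).hasFDerivWithinAt) ?_ _
        rw [← polarCoord.symm_source]
        exact polarCoord.symm.injOn
    _ = ∫⁻ p in polarCoord.target, ENNReal.ofReal p.1 * g (Complex.polarCoord.symm p) := by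
        refine setLIntegral_congr_fun polarCoord.open_target.measurableSet
          (fun p hp => ?_)
        rw [B_det, abs_of_pos hp.1]
        congr 1


/-- For every `c′ > 0` and every `ε ∈ (0, exp(−e))`, there exists `C > 0`
such that for all `t > 0`:
`∫_{0 < |u| < ε} exp(−c′·(log log(1/|u|))²/t) · (|u|²·log(1/|u|))⁻¹ dA(u)
  ≤ C·√t·exp(−(c′/2)·(log log(1/ε))²/t)`,
where `dA` is Lebesgue measure on `ℂ`. -/
theorem cusp_gaussian_integral_estimate (c' : ℝ) (hc' : 0 < c')
    (ε : ℝ) (hε0 : 0 < ε) (hε1 : ε < Real.exp (-Real.exp 1)) :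
    ∃ C > (0 : ℝ), ∀ t > (0 : ℝ),
      ∫⁻ u in {u : ℂ | 0 < ‖u‖ ∧ ‖u‖ < ε},
          ENNReal.ofReal
            (Real.exp (-c' * Real.log (Real.log (1 / ‖u‖)) ^ 2 / t) *
              (‖u‖ ^ 2 * Real.log (1 / ‖u‖))⁻¹) ≤
        ENNReal.ofReal
          (C * Real.sqrt t * Real.exp (-(c' / 2) * Real.log (Real.log (1 / ε)) ^ 2 / t)) := by
  set s₀ : ℝ := Real.log (Real.log (1 / ε)) with hs₀def
  have hεlt1 : ε < 1 := lt_trans hε1 (by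
    rw [Real.exp_lt_one_iff, neg_lt_zero]; exact Real.exp_pos 1)
  have hL : Real.exp 1 < Real.log (1 / ε) := by
    rw [one_div, Real.lt_log_iff_exp_lt (by positivity)]
    rw [lt_inv_comm₀ (Real.exp_pos _) hε0, ← Real.exp_neg]
    exact hε1
  have hLpos : (0 : ℝ) < Real.log (1 / ε) := lt_trans (Real.exp_pos 1) hL
  have hs₀ : 1 < s₀ := by
    have := Real.log_lt_log (Real.exp_pos 1) hL
    rwa [Real.log_exp] at this
  have hs₀pos : (0 : ℝ) < s₀ := lt_trans one_pos hs₀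
  refine ⟨2 * Real.pi * Real.sqrt (2 * Real.pi / c'), by positivity, fun t ht => ?_⟩
  set expr : ℝ → ℝ := fun r =>
    Real.exp (-c' * Real.log (Real.log (1 / r)) ^ 2 / t) * (r ^ 2 * Real.log (1 / r))⁻¹
    with hexpr
  have hSmeas : MeasurableSet {u : ℂ | 0 < ‖u‖ ∧ ‖u‖ < ε} := by
    have : {u : ℂ | 0 < ‖u‖ ∧ ‖u‖ < ε}
        = (fun u : ℂ => ‖u‖) ⁻¹' (Ioo 0 ε) := rfl
    rw [this]
    exact measurableSet_Ioo.preimage continuous_norm.measurable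
  have hexprm : Measurable fun r : ℝ => ENNReal.ofReal (expr r) := by
    apply Measurable.ennreal_ofReal
    have m1 : Measurable fun r : ℝ => Real.log (1 / r) :=
      Real.measurable_log.comp (measurable_const.div measurable_id)
    have m2 : Measurable fun r : ℝ => Real.exp (-c' * Real.log (Real.log (1 / r)) ^ 2 / t) :=
      Real.measurable_exp.comp
        ((((Real.measurable_log.comp m1).pow_const 2).const_mul (-c')).div_const t)
    exact m2.mul (((measurable_id.pow_const 2).mul m1).inv)
  set F : ℝ → ENNReal := fun r =>
    ENNReal.ofReal r * (Ioo (0:ℝ) ε).indicator (fun r => ENNReal.ofReal (expr r)) r with hF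
  have hFm : Measurable F := by
    apply Measurable.mul
    · exact ENNReal.measurable_ofReal.comp measurable_id
    · exact hexprm.indicator measurableSet_Ioo
  have step1 : ∫⁻ u in {u : ℂ | 0 < ‖u‖ ∧ ‖u‖ < ε},
      ENNReal.ofReal (expr (‖u‖))
      = ∫⁻ p in polarCoord.target, F p.1 := by
    rw [← lintegral_indicator hSmeas,
      lintegral_comp_polarCoord_symm' ({u : ℂ | 0 < ‖u‖ ∧ ‖u‖ < ε}.indicator
        fun u => ENNReal.ofReal (expr (‖u‖)))]
    refine setLIntegral_congr_fun polarCoord.open_target.measurableSet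
      (fun p hp => ?_)
    have habs : ‖Complex.polarCoord.symm p‖ = p.1 := by
      rw [Complex.norm_polarCoord_symm, abs_of_pos hp.1]
    rw [hF]
    simp only [Set.indicator, mem_setOf_eq, habs, mem_Ioo]
  have step2 : ∫⁻ p in polarCoord.target, F p.1
      = (∫⁻ r in Ioi (0:ℝ), F r) * ENNReal.ofReal (2 * Real.pi) := by
    have htarget : polarCoord.target = Ioi (0:ℝ) ×ˢ Ioo (-Real.pi) Real.pi := rfl
    rw [htarget, Measure.volume_eq_prod, ← Measure.prod_restrict,
      lintegral_prod (fun p => F p.1) ((hFm.comp measurable_fst).aemeasurable)]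
    simp only [lintegral_const, Measure.restrict_apply MeasurableSet.univ, univ_inter,
      Real.volume_Ioo]
    rw [lintegral_mul_const' _ _ (by simp)]
    congr 1
    rw [sub_neg_eq_add, two_mul]
  have step3 : ∫⁻ r in Ioi (0:ℝ), F r
      = ∫⁻ r in Ioo (0:ℝ) ε, ENNReal.ofReal (r * expr r) := by
    have : ∀ r : ℝ, F r = (Ioo (0:ℝ) ε).indicator
        (fun r => ENNReal.ofReal (r * expr r)) r := by
      intro r
      rw [hF]
      dsimp only
      by_cases hr : r ∈ Ioo (0:ℝ) ε
      · rw [Set.indicator_of_mem hr, Set.indicator_of_mem hr,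
          ENNReal.ofReal_mul hr.1.le]
      · rw [Set.indicator_of_notMem hr, Set.indicator_of_notMem hr, mul_zero]
    simp only [this]
    rw [lintegral_indicator measurableSet_Ioo, Measure.restrict_restrict measurableSet_Ioo,
      inter_eq_left.2 (fun x hx => hx.1)]
  have hexps₀ : Real.exp s₀ = Real.log (1 / ε) := Real.exp_log hLpos
  have himg : Ioo (0:ℝ) ε = (fun s => Real.exp (-Real.exp s)) '' Ioi s₀ := by
    ext r
    constructor
    · rintro ⟨hr0, hrε⟩
      have h1r : (1:ℝ) < 1 / r := by
        rw [lt_div_iff₀ hr0, one_mul]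
        exact lt_trans hrε hεlt1
      have hlogr : (0:ℝ) < Real.log (1 / r) := Real.log_pos h1r
      refine ⟨Real.log (Real.log (1 / r)), ?_, ?_⟩
      · rw [mem_Ioi, hs₀def]
        apply Real.log_lt_log hLpos
        apply Real.log_lt_log (by positivity)
        rw [div_lt_div_iff₀ hε0 hr0, one_mul, one_mul]
        exact hrε
      · show Real.exp (-Real.exp (Real.log (Real.log (1 / r)))) = r
        rw [Real.exp_log hlogr, Real.log_div one_ne_zero (ne_of_gt hr0), Real.log_one,
          zero_sub, neg_neg, Real.exp_log hr0]
    · rintro ⟨x, hx, rfl⟩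
      constructor
      · exact Real.exp_pos _
      · rw [← Real.exp_log hε0]
        apply Real.exp_lt_exp.2
        rw [neg_lt, ← Real.log_inv, ← one_div, ← hexps₀]
        exact Real.exp_lt_exp.2 hx
  have hderiv : ∀ x ∈ Ioi s₀, HasDerivWithinAt (fun s => Real.exp (-Real.exp s))
      (Real.exp (-Real.exp x) * -Real.exp x) (Ioi s₀) x :=
    fun x _ => ((Real.hasDerivAt_exp x).neg.exp).hasDerivWithinAt
  have hinj : Set.InjOn (fun s => Real.exp (-Real.exp s)) (Ioi s₀) := by
    intro a _ b _ hab
    simp only at hab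
    exact Real.exp_injective (neg_injective (Real.exp_injective hab))
  have step4 : ∫⁻ r in Ioo (0:ℝ) ε, ENNReal.ofReal (r * expr r)
      = ∫⁻ x in Ioi s₀, ENNReal.ofReal |Real.exp (-Real.exp x) * -Real.exp x| *
          ENNReal.ofReal (Real.exp (-Real.exp x) * expr (Real.exp (-Real.exp x))) := by
    rw [himg]
    exact lintegral_image_eq_lintegral_abs_deriv_mul' measurableSet_Ioi hderiv hinj _
  have step5 : ∀ x ∈ Ioi s₀, ENNReal.ofReal |Real.exp (-Real.exp x) * -Real.exp x| *
      ENNReal.ofReal (Real.exp (-Real.exp x) * expr (Real.exp (-Real.exp x)))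
      = ENNReal.ofReal (Real.exp (-c' * x ^ 2 / t)) := by
    intro x _
    have h1 : 1 / Real.exp (-Real.exp x) = Real.exp (Real.exp x) := by
      rw [one_div, ← Real.exp_neg, neg_neg]
    have habs : |Real.exp (-Real.exp x) * -Real.exp x|
        = Real.exp (-Real.exp x) * Real.exp x := by
      rw [abs_mul, abs_neg, abs_of_pos (Real.exp_pos _), abs_of_pos (Real.exp_pos _)]
    rw [habs, ← ENNReal.ofReal_mul (by positivity)]
    congr 1
    rw [hexpr]
    dsimp only
    rw [h1, Real.log_exp, Real.log_exp]
    have e1 := Real.exp_ne_zero (-Real.exp x)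
    have e2 := Real.exp_ne_zero x
    field_simp
  have hb : 0 < c' / (2 * t) := by positivity
  have hgauss : ∫⁻ x : ℝ, ENNReal.ofReal (Real.exp (-(c' / (2 * t)) * x ^ 2))
      = ENNReal.ofReal (Real.sqrt (Real.pi / (c' / (2 * t)))) := by
    rw [← integral_gaussian (c' / (2 * t)),
      ← ofReal_integral_eq_lintegral_ofReal (integrable_exp_neg_mul_sq hb)
        (Filter.Eventually.of_forall fun x => (Real.exp_pos _).le)]
  have step6 : ∫⁻ x in Ioi s₀, ENNReal.ofReal (Real.exp (-c' * x ^ 2 / t))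
      ≤ ENNReal.ofReal (Real.exp (-(c' / 2) * s₀ ^ 2 / t)) *
          ENNReal.ofReal (Real.sqrt (Real.pi / (c' / (2 * t)))) := by
    have hpt : ∀ x ∈ Ioi s₀, ENNReal.ofReal (Real.exp (-c' * x ^ 2 / t))
        ≤ ENNReal.ofReal (Real.exp (-(c' / 2) * s₀ ^ 2 / t)) *
            ENNReal.ofReal (Real.exp (-(c' / (2 * t)) * x ^ 2)) := by
      intro x hx
      rw [← ENNReal.ofReal_mul (Real.exp_pos _).le, ← Real.exp_add]
      apply ENNReal.ofReal_le_ofReal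
      apply Real.exp_le_exp.2
      have hx2 : s₀ ^ 2 ≤ x ^ 2 := by nlinarith [le_of_lt (mem_Ioi.1 hx)]
      have h2 : -(c' / (2 * t)) * x ^ 2 = -(c' / 2) * x ^ 2 / t := by
        field_simp
      rw [h2, ← add_div, div_le_div_iff₀ ht ht]
      nlinarith [mul_nonneg (mul_nonneg (le_of_lt (half_pos hc'))
        (sub_nonneg.2 hx2)) ht.le]
    calc ∫⁻ x in Ioi s₀, ENNReal.ofReal (Real.exp (-c' * x ^ 2 / t))
        ≤ ∫⁻ x in Ioi s₀, ENNReal.ofReal (Real.exp (-(c' / 2) * s₀ ^ 2 / t)) *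
            ENNReal.ofReal (Real.exp (-(c' / (2 * t)) * x ^ 2)) := by
          refine setLIntegral_mono (Measurable.const_mul ?_ _) hpt
          exact (Real.measurable_exp.comp ((measurable_id.pow_const 2).const_mul
            (-(c' / (2 * t))))).ennreal_ofReal
      _ = ENNReal.ofReal (Real.exp (-(c' / 2) * s₀ ^ 2 / t)) *
            ∫⁻ x in Ioi s₀, ENNReal.ofReal (Real.exp (-(c' / (2 * t)) * x ^ 2)) :=
          lintegral_const_mul' _ _ ENNReal.ofReal_ne_top
      _ ≤ ENNReal.ofReal (Real.exp (-(c' / 2) * s₀ ^ 2 / t)) *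
            ∫⁻ x : ℝ, ENNReal.ofReal (Real.exp (-(c' / (2 * t)) * x ^ 2)) :=
          mul_le_mul_right (setLIntegral_le_lintegral _ _) _
      _ = _ := by rw [hgauss]
  have hsqrt : Real.sqrt (Real.pi / (c' / (2 * t)))
      = Real.sqrt (2 * Real.pi / c') * Real.sqrt t := by
    rw [← Real.sqrt_mul (by positivity)]
    congr 1
    field_simp
  calc ∫⁻ u in {u : ℂ | 0 < ‖u‖ ∧ ‖u‖ < ε},
        ENNReal.ofReal (expr (‖u‖))
      = (∫⁻ x in Ioi s₀, ENNReal.ofReal (Real.exp (-c' * x ^ 2 / t))) *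
          ENNReal.ofReal (2 * Real.pi) := by
        rw [step1, step2, step3, step4,
          setLIntegral_congr_fun measurableSet_Ioi step5]
    _ ≤ (ENNReal.ofReal (Real.exp (-(c' / 2) * s₀ ^ 2 / t)) *
          ENNReal.ofReal (Real.sqrt (Real.pi / (c' / (2 * t))))) *
          ENNReal.ofReal (2 * Real.pi) := mul_le_mul_left step6 _
    _ ≤ ENNReal.ofReal (2 * Real.pi * Real.sqrt (2 * Real.pi / c') * Real.sqrt t *
          Real.exp (-(c' / 2) * s₀ ^ 2 / t)) := by
        rw [← ENNReal.ofReal_mul (Real.exp_pos _).le,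
          ← ENNReal.ofReal_mul (by positivity)]
        apply ENNReal.ofReal_le_ofReal
        rw [hsqrt]
        apply le_of_eq
        ring
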